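/- Let X be a metric space and (f_j) a sequence of functionals from X to ℝ∪{+∞} that Γ-converges to f_∞ and is equi-mildly coercive. Let ε_j → 0 with ε_j > 0, and let x_j be an ε_j-minimizer of f_j for each j. Then any cluster point x_∞ of (x_j) is a minimizer of f_∞, and f_∞(x_∞) = lim_j f_j(x_j). -/

import Mathlib

open Filter Topology

/-- Subsequence Γ-liminf lemma: if the liminf inequality holds for all sequences
converging to `y`, it also holds along subsequences of indices. -/
lemma gamma_liminf_subseq {X : Type*} [TopologicalSpace X]
    (fj : ℕ → X → EReal) (g : EReal) (σ : ℕ → ℕ) (hσ : StrictMono σ)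
    (v : ℕ → X) (y : X) (hv : Tendsto v atTop (𝓝 y))
    (H : ∀ u : ℕ → X, Tendsto u atTop (𝓝 y) →
      g ≤ atTop.liminf (fun j => fj j (u j))) :
    g ≤ atTop.liminf (fun k => fj (σ k) (v k)) := by
  classical
  set u : ℕ → X := fun j => if h : ∃ k, σ k = j then v h.choose else y with hu_def
  have hu : ∀ k, u (σ k) = v k := by
    intro k
    have h : ∃ k', σ k' = σ k := ⟨k, rfl⟩
    simp only [hu_def, dif_pos h]
    exact congrArg v (hσ.injective h.choose_spec)
  have hut : Tendsto u atTop (𝓝 y) := by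
    intro s hs
    rw [mem_map, mem_atTop_sets]
    obtain ⟨N, hN⟩ := (hv hs : _ ∈ map v atTop) |> mem_map.mp |> mem_atTop_sets.mp
    refine ⟨σ N, fun j hj => ?_⟩
    by_cases h : ∃ k, σ k = j
    · have hk : σ h.choose = j := h.choose_spec
      have : N ≤ h.choose := by
        have h2 : σ N ≤ σ h.choose := by rw [hk]; exact hj
        exact (hσ.le_iff_le).mp h2
      simp only [hu_def, Set.mem_preimage, dif_pos h]
      exact hN _ this
    · simp only [hu_def, Set.mem_preimage, dif_neg h]
      exact mem_of_mem_nhds hs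
  calc g ≤ atTop.liminf (fun j => fj j (u j)) := H u hut
    _ ≤ atTop.liminf ((fun j => fj j (u j)) ∘ σ) := by
        rw [liminf_comp]
        exact liminf_le_liminf_of_le (hσ.tendsto_atTop)
    _ = atTop.liminf (fun k => fj (σ k) (v k)) := by
        congr 1
        exact funext fun k => by simp only [Function.comp_apply, hu]

/-- In a metric space, if `(fj)` Γ-converges (sequentially) to
`finf`, is equi-mildly coercive, and `x j` is an `ε j`-minimizer of `fj j` with
`ε j → 0`, then any cluster point `xinf` of `(x j)` is a minimizer of `finf` and
`finf xinf = lim_j fj j (x j)`. The functionals take values in `ℝ ∪ {+∞}`. -/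
theorem cluster_point_of_eps_minimizers_is_minimizer
    {X : Type*} [MetricSpace X]
    (fj : ℕ → X → EReal) (finf : X → EReal)
    (hnotbot : ∀ j x, fj j x ≠ ⊥) (hnotbot' : ∀ x, finf x ≠ ⊥)
    (hGamma : ∀ x : X,
      (∀ u : ℕ → X, Tendsto u atTop (𝓝 x) →
        finf x ≤ atTop.liminf (fun j => fj j (u j))) ∧
      (∃ u : ℕ → X, Tendsto u atTop (𝓝 x) ∧
        atTop.limsup (fun j => fj j (u j)) ≤ finf x))
    (hcoercive : ∃ K : Set X, K.Nonempty ∧ IsCompact K ∧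
      ∀ j, (⨅ x : X, fj j x) = ⨅ x ∈ K, fj j x)
    (ε : ℕ → ℝ) (hε : ∀ j, 0 < ε j) (hε0 : Tendsto ε atTop (𝓝 0))
    (x : ℕ → X)
    (hmin : ∀ j, fj j (x j) ≤
      max ((⨅ y : X, fj j y) + ((ε j : ℝ) : EReal)) (((-(ε j)⁻¹ : ℝ) : EReal)))
    (xinf : X) (φ : ℕ → ℕ) (hφ : StrictMono φ)
    (hconv : Tendsto (x ∘ φ) atTop (𝓝 xinf)) :
    (∀ y : X, finf xinf ≤ finf y) ∧
      Tendsto (fun j => fj j (x j)) atTop (𝓝 (finf xinf)) := by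
  obtain ⟨K, hKne, hKc, hKinf⟩ := hcoercive
  -- limsup of ε coerced to EReal is 0
  have hεE : Tendsto (fun j => ((ε j : ℝ) : EReal)) atTop (𝓝 (0 : EReal)) := by
    simpa using EReal.tendsto_coe.mpr hε0
  have hεlimsup : atTop.limsup (fun j => ((ε j : ℝ) : EReal)) = 0 := hεE.limsup_eq
  -- the penalty term tends to ⊥
  have hpen : Tendsto (fun j => ((-(ε j)⁻¹ : ℝ) : EReal)) atTop (𝓝 (⊥ : EReal)) := by
    rw [EReal.tendsto_nhds_bot_iff_real]
    intro r
    have h1 : Tendsto (fun j => (ε j)⁻¹) atTop atTop := by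
      apply tendsto_inv_nhdsGT_zero.comp
      exact tendsto_nhdsWithin_of_tendsto_nhds_of_eventually_within _ hε0
        (Eventually.of_forall fun j => hε j)
    have h2 : Tendsto (fun j => -(ε j)⁻¹) atTop atBot := tendsto_neg_atBot_iff.mpr h1
    filter_upwards [h2.eventually_lt_atBot r] with j hj
    exact_mod_cast hj
  have hpenlimsup : atTop.limsup (fun j => ((-(ε j)⁻¹ : ℝ) : EReal)) = ⊥ := hpen.limsup_eq
  -- Step 1: limsup of f_j(x_j) is at most finf y for every y
  have hS : ∀ y : X, atTop.limsup (fun j => fj j (x j)) ≤ finf y := by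
    intro y
    obtain ⟨u, hu, hurec⟩ := (hGamma y).2
    have h1 : ∀ j, fj j (x j) ≤
        max (fj j (u j) + ((ε j : ℝ) : EReal)) (((-(ε j)⁻¹ : ℝ) : EReal)) := by
      intro j
      refine (hmin j).trans (max_le_max ?_ le_rfl)
      exact add_le_add (iInf_le _ _) le_rfl
    calc atTop.limsup (fun j => fj j (x j))
        ≤ atTop.limsup (fun j =>
            max (fj j (u j) + ((ε j : ℝ) : EReal)) (((-(ε j)⁻¹ : ℝ) : EReal))) :=
          limsup_le_limsup (Eventually.of_forall h1)
      _ = max (atTop.limsup (fun j => fj j (u j) + ((ε j : ℝ) : EReal)))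
            (atTop.limsup (fun j => ((-(ε j)⁻¹ : ℝ) : EReal))) := limsup_max
      _ ≤ finf y := by
          rw [hpenlimsup]
          simp only [le_refl, max_le_iff, bot_le, and_true]
          have hadd : atTop.limsup (fun j => fj j (u j) + ((ε j : ℝ) : EReal)) ≤
              atTop.limsup (fun j => fj j (u j)) + atTop.limsup (fun j => ((ε j : ℝ) : EReal)) := by
            apply EReal.limsup_add_le
            · right; simp [hεlimsup]
            · right; simp [hεlimsup]
          rw [hεlimsup, add_zero] at hadd
          exact hadd.trans hurec
  -- Step 2: finf xinf ≤ finf y for every y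
  have hx1 : ∀ y : X, finf xinf ≤ finf y := by
    intro y
    have A : finf xinf ≤ atTop.liminf (fun k => fj (φ k) (x (φ k))) :=
      gamma_liminf_subseq fj (finf xinf) φ hφ (x ∘ φ) xinf hconv (hGamma xinf).1
    have B : atTop.liminf (fun k => fj (φ k) (x (φ k))) ≤
        atTop.limsup (fun k => fj (φ k) (x (φ k))) := liminf_le_limsup
    have C : atTop.limsup (fun k => fj (φ k) (x (φ k))) ≤
        atTop.limsup (fun j => fj j (x j)) := by
      have : (fun k => fj (φ k) (x (φ k))) = (fun j => fj j (x j)) ∘ φ := rfl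
      rw [this, limsup_comp]
      exact limsup_le_limsup_of_le (hφ.tendsto_atTop)
    exact A.trans (B.trans (C.trans (hS y)))
  -- Step 3: liminf of infima is at least the infimum of finf
  have hC : (⨅ y, finf y) ≤ atTop.liminf (fun j => ⨅ z, fj j z) := by
    by_contra h
    push_neg at h
    obtain ⟨c, hc1, hc2⟩ := exists_between h
    have hfreq : ∃ᶠ j in atTop, (⨅ z, fj j z) < c := frequently_lt_of_liminf_lt (by isBoundedDefault) hc1
    obtain ⟨ψ, hψ, hψP⟩ := extraction_of_frequently_atTop hfreq
    have hy : ∀ k, ∃ y ∈ K, fj (ψ k) y < c := by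
      intro k
      have := hψP k
      rw [hKinf (ψ k)] at this
      simpa only [iInf_lt_iff, exists_prop] using this
    choose y hyK hylt using hy
    obtain ⟨yb, hybK, ρ, hρ, hvt⟩ := hKc.tendsto_subseq hyK
    have hA : finf yb ≤ atTop.liminf (fun k => fj (ψ (ρ k)) (y (ρ k))) :=
      gamma_liminf_subseq fj (finf yb) (ψ ∘ ρ) (hψ.comp hρ) (y ∘ ρ) yb hvt (hGamma yb).1
    have hB : atTop.liminf (fun k => fj (ψ (ρ k)) (y (ρ k))) ≤ c := by
      calc atTop.liminf (fun k => fj (ψ (ρ k)) (y (ρ k)))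
          ≤ atTop.liminf (fun _ : ℕ => c) :=
            liminf_le_liminf (Eventually.of_forall fun k => (hylt (ρ k)).le)
        _ = c := liminf_const c
    have : finf yb < finf yb := lt_of_le_of_lt (hA.trans hB) (hc2.trans_le (iInf_le _ yb))
    exact absurd this (lt_irrefl _)
  -- conclude
  have hinf_eq : (⨅ y, finf y) = finf xinf := le_antisymm (iInf_le _ _) (le_iInf hx1)
  have hliminf : finf xinf ≤ atTop.liminf (fun j => fj j (x j)) := by
    rw [← hinf_eq]
    exact hC.trans (liminf_le_liminf (Eventually.of_forall fun j => iInf_le _ (x j)))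
  exact ⟨hx1, tendsto_of_le_liminf_of_limsup_le hliminf (hS xinf)⟩
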